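/- (Motzkin–Straus) Let G = (V,E) be a simple graph on n ≥ 1 vertices with clique number ω(G), and let Δ_n := {(x_1,…,x_n) ∈ ℝ^n : x_i ≥ 0 for all i, Σ_{i=1}^n x_i = 1} be the standard simplex. Then 1 − 1/ω(G) = 2 · max_{x ∈ Δ_n} Σ_{{i,j} ∈ E} x_i x_j. -/

import Mathlib

open Finset

section MotzkinStraus

variable {n : ℕ} (G : SimpleGraph (Fin n)) [DecidableRel G.Adj]

/-- The quadratic form over ordered pairs. -/
noncomputable def MSQf (x : Fin n → ℝ) : ℝ :=
  ∑ i, ∑ j, if G.Adj i j then x i * x j else 0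

/-- Weighted neighborhood sum. -/
noncomputable def MSNf (x : Fin n → ℝ) (v : Fin n) : ℝ :=
  ∑ j, if G.Adj v j then x j else 0

lemma MS_two_mul_edge_sum (x : Fin n → ℝ) :
    2 * ∑ e ∈ G.edgeFinset,
        Sym2.lift ⟨fun i j => x i * x j, fun i j => mul_comm _ _⟩ e = MSQf G x := by
  classical
  have h1 : MSQf G x = ∑ p ∈ (univ : Finset (Fin n × Fin n)) with G.Adj p.1 p.2,
      x p.1 * x p.2 := by
    rw [MSQf, ← Finset.sum_product']
    rw [Finset.sum_filter]
    rfl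
  have hmaps : ∀ p ∈ (univ : Finset (Fin n × Fin n)).filter (fun p => G.Adj p.1 p.2),
      s(p.1, p.2) ∈ G.edgeFinset := by
    intro p hp
    simp only [mem_filter] at hp
    simpa [SimpleGraph.mem_edgeFinset] using hp.2
  rw [h1, ← Finset.sum_fiberwise_of_maps_to hmaps (fun p => x p.1 * x p.2)]
  rw [Finset.mul_sum]
  refine Finset.sum_congr rfl ?_
  intro e he
  induction e with
  | _ a b =>
    have hab : G.Adj a b := by simpa [SimpleGraph.mem_edgeFinset] using he
    have hne : a ≠ b := hab.ne
    have hfib : ((univ : Finset (Fin n × Fin n)).filter (fun p => G.Adj p.1 p.2)).filter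
        (fun p => s(p.1, p.2) = s(a, b)) = {(a, b), (b, a)} := by
      ext p
      simp only [mem_filter, mem_univ, true_and, mem_insert, mem_singleton, Sym2.eq_iff]
      constructor
      · rintro ⟨_, (⟨h1, h2⟩ | ⟨h1, h2⟩)⟩
        · left; exact Prod.ext h1 h2
        · right; exact Prod.ext h1 h2
      · rintro (rfl | rfl)
        · exact ⟨hab, Or.inl ⟨rfl, rfl⟩⟩
        · exact ⟨hab.symm, Or.inr ⟨rfl, rfl⟩⟩
    rw [hfib, Sym2.lift_mk]
    rw [Finset.sum_pair (fun h => hne (congrArg Prod.fst h))]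
    ring

lemma MSQf_le_of_clique (x : Fin n → ℝ) (hx0 : ∀ i, 0 ≤ x i) (hx1 : ∑ i, x i = 1)
    (hcl : G.IsClique ((univ : Finset (Fin n)).filter (fun i => x i ≠ 0) : Finset (Fin n))) :
    MSQf G x ≤ 1 - 1 / (G.cliqueNum : ℝ) := by
  classical
  set t : Finset (Fin n) := (univ : Finset (Fin n)).filter (fun i => x i ≠ 0) with ht
  have hxt : ∀ i ∉ t, x i = 0 := by
    intro i hi
    by_contra h
    exact hi (by simp [ht, h])
  have hsum_t : ∑ i ∈ t, x i = 1 := by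
    rw [← hx1]
    exact Finset.sum_subset (subset_univ t) (fun i _ hi => hxt i hi)
  have htcard : t.card ≤ G.cliqueNum := hcl.card_le_cliqueNum
  have htpos : 0 < t.card := by
    rcases Finset.eq_empty_or_nonempty t with h | h
    · simp [h] at hsum_t
    · exact Finset.card_pos.mpr h
  have hwpos : 0 < (G.cliqueNum : ℝ) := by
    exact_mod_cast lt_of_lt_of_le htpos htcard
  have h1 : MSQf G x ≤ ∑ i, ∑ j, (if i = j then 0 else x i * x j) := by
    refine Finset.sum_le_sum fun i _ => Finset.sum_le_sum fun j _ => ?_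
    by_cases h : G.Adj i j
    · simp [h, h.ne, mul_nonneg (hx0 i) (hx0 j)]
    · simp only [if_neg h]
      split
      · exact le_rfl
      · exact mul_nonneg (hx0 i) (hx0 j)
  have h2 : ∑ i, ∑ j, (if i = j then (0:ℝ) else x i * x j) = 1 - ∑ i, x i ^ 2 := by
    have key : ∀ i : Fin n, ∑ j, (if i = j then (0:ℝ) else x i * x j)
        = x i * (∑ j, x j) - x i ^ 2 := by
      intro i
      have : ∑ j, (if i = j then (0:ℝ) else x i * x j)
          = ∑ j, (x i * x j - if i = j then x i * x j else 0) := by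
        refine Finset.sum_congr rfl fun j _ => ?_
        split <;> ring_nf
      rw [this, Finset.sum_sub_distrib, Finset.sum_ite_eq (univ : Finset (Fin n)) i
        (fun j => x i * x j), Finset.mul_sum]
      simp [sq]
    rw [Finset.sum_congr rfl (fun i _ => key i), Finset.sum_sub_distrib]
    simp only [hx1, mul_one]
  have h3 : 1 / (G.cliqueNum : ℝ) ≤ ∑ i, x i ^ 2 := by
    have hcs := sq_sum_le_card_mul_sum_sq (s := t) (f := x)
    rw [hsum_t] at hcs
    have hsq : ∑ i ∈ t, x i ^ 2 ≤ ∑ i, x i ^ 2 :=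
      Finset.sum_le_sum_of_subset_of_nonneg (subset_univ t)
        (fun i _ _ => sq_nonneg _)
    have hc : (1:ℝ) ≤ (t.card : ℝ) * ∑ i, x i ^ 2 := by
      calc (1:ℝ) = 1 ^ 2 := by ring
      _ ≤ (t.card : ℝ) * ∑ i ∈ t, x i ^ 2 := by exact_mod_cast hcs
      _ ≤ (t.card : ℝ) * ∑ i, x i ^ 2 := by
          apply mul_le_mul_of_nonneg_left hsq (by positivity)
    have htc : (t.card : ℝ) ≤ (G.cliqueNum : ℝ) := by exact_mod_cast htcard
    rw [div_le_iff₀ hwpos]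
    calc (1:ℝ) ≤ (t.card : ℝ) * ∑ i, x i ^ 2 := hc
    _ ≤ (G.cliqueNum : ℝ) * ∑ i, x i ^ 2 := by
        apply mul_le_mul_of_nonneg_right htc
        positivity
    _ = (∑ i, x i ^ 2) * (G.cliqueNum : ℝ) := by ring
  rw [h2] at h1
  linarith [h3]

lemma MS_shift_eq (x : Fin n → ℝ) (c : ℝ) (a b : Fin n) (hne : a ≠ b)
    (hnadj : ¬ G.Adj a b) :
    MSQf G (fun i => x i + c * ((if i = a then (1:ℝ) else 0) - (if i = b then 1 else 0)))
      = MSQf G x + 2 * c * (MSNf G x a - MSNf G x b) := by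
  classical
  set D : Fin n → ℝ := fun i => c * ((if i = a then (1:ℝ) else 0) - (if i = b then 1 else 0))
    with hDdef
  set x' : Fin n → ℝ := fun i => x i + D i with hx'def
  have hDa : D a = c := by simp [hDdef, hne]
  have hDb : D b = -c := by simp [hDdef, hne.symm]
  have hD0 : ∀ i, i ≠ a → i ≠ b → D i = 0 := by
    intro i h1 h2; simp [hDdef, h1, h2]
  have hN' : ∀ v : Fin n, ¬ G.Adj v a → ¬ G.Adj v b →
      (∑ j, if G.Adj v j then x' j else 0) = MSNf G x v := by
    intro v hva hvb
    refine Finset.sum_congr rfl fun j _ => ?_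
    by_cases hj : G.Adj v j
    · have hja : j ≠ a := fun h => hva (h ▸ hj)
      have hjb : j ≠ b := fun h => hvb (h ▸ hj)
      simp [hj, hx'def, hD0 j hja hjb]
    · simp [hj]
  have hN'a : (∑ j, if G.Adj a j then x' j else 0) = MSNf G x a :=
    hN' a (G.loopless.irrefl a) hnadj
  have hN'b : (∑ j, if G.Adj b j then x' j else 0) = MSNf G x b :=
    hN' b (fun h => hnadj h.symm) (G.loopless.irrefl b)
  have hM : ∀ v : Fin n, (∑ i, if G.Adj i v then x i else 0) = MSNf G x v := by
    intro v
    refine Finset.sum_congr rfl fun i _ => ?_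
    have : G.Adj i v ↔ G.Adj v i := G.adj_comm i v
    by_cases h : G.Adj i v
    · rw [if_pos h, if_pos (this.mp h)]
    · rw [if_neg h, if_neg (fun h' => h (this.mpr h'))]
  have hsplit : ∀ i j : Fin n, (if G.Adj i j then x' i * x' j else 0)
      = (if G.Adj i j then x i * x j else 0)
        + D i * (if G.Adj i j then x' j else 0)
        + (if G.Adj i j then x i else 0) * D j := by
    intro i j
    by_cases h : G.Adj i j
    · simp only [if_pos h, hx'def]
      ring
    · simp [h]
  have hQ : MSQf G x' = MSQf G x
      + (∑ i, D i * (∑ j, if G.Adj i j then x' j else 0))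
      + (∑ j, (∑ i, if G.Adj i j then x i else 0) * D j) := by
    rw [MSQf]
    calc ∑ i, ∑ j, (if G.Adj i j then x' i * x' j else 0)
        = ∑ i, ∑ j, ((if G.Adj i j then x i * x j else 0)
          + D i * (if G.Adj i j then x' j else 0)
          + (if G.Adj i j then x i else 0) * D j) := by
          exact Finset.sum_congr rfl fun i _ => Finset.sum_congr rfl fun j _ => hsplit i j
      _ = MSQf G x + (∑ i, D i * (∑ j, if G.Adj i j then x' j else 0))
          + (∑ j, (∑ i, if G.Adj i j then x i else 0) * D j) := by
          simp only [Finset.sum_add_distrib]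
          rw [MSQf]
          congr 1
          · congr 1
            refine Finset.sum_congr rfl fun i _ => ?_
            rw [Finset.mul_sum]
          · rw [Finset.sum_comm]
            refine Finset.sum_congr rfl fun j _ => ?_
            rw [Finset.sum_mul]
  have hsupp : ∀ (g : Fin n → ℝ), (∀ i, i ≠ a → i ≠ b → g i = 0) →
      (∑ i, g i) = g a + g b := by
    intro g hg
    rw [← Finset.sum_subset (Finset.subset_univ ({a, b} : Finset (Fin n)))
      (fun i _ hi => by
        simp only [mem_insert, mem_singleton] at hi
        push_neg at hi
        exact hg i hi.1 hi.2)]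
    exact Finset.sum_pair hne
  have hterm2 : (∑ i, D i * (∑ j, if G.Adj i j then x' j else 0))
      = c * (MSNf G x a - MSNf G x b) := by
    rw [hsupp _ (fun i h1 h2 => by rw [hD0 i h1 h2, zero_mul])]
    rw [hDa, hDb, hN'a, hN'b]
    ring
  have hterm3 : (∑ j, (∑ i, if G.Adj i j then x i else 0) * D j)
      = c * (MSNf G x a - MSNf G x b) := by
    rw [hsupp _ (fun j h1 h2 => by rw [hD0 j h1 h2, mul_zero])]
    rw [hDa, hDb, hM a, hM b]
    ring
  rw [hx'def] at hQ
  rw [hQ, hterm2, hterm3]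
  ring

/-- One zero-shifting step: if `a, b` are distinct non-adjacent vertices with positive
weight and the neighborhood sum at `b` is at most that at `a`, we can move all mass
from `b` to `a` without decreasing the quadratic form. -/
lemma MS_step (x : Fin n → ℝ) (hx0 : ∀ i, 0 ≤ x i) (hx1 : ∑ i, x i = 1)
    (a b : Fin n) (hne : a ≠ b) (hnadj : ¬ G.Adj a b)
    (ha : x a ≠ 0) (hN : MSNf G x b ≤ MSNf G x a) :
    ∃ x' : Fin n → ℝ, (∀ i, 0 ≤ x' i) ∧ (∑ i, x' i) = 1 ∧
      ((univ : Finset (Fin n)).filter (fun i => x' i ≠ 0)) ⊆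
        ((univ : Finset (Fin n)).filter (fun i => x i ≠ 0)).erase b ∧
      MSQf G x ≤ MSQf G x' := by
  classical
  set c : ℝ := x b with hc
  set x' : Fin n → ℝ :=
    fun i => x i + c * ((if i = a then (1:ℝ) else 0) - (if i = b then 1 else 0)) with hx'
  have hx'a : x' a = x a + c := by simp [hx', hne]
  have hx'b : x' b = 0 := by simp [hx', hne.symm, hc]
  have hx'other : ∀ i, i ≠ a → i ≠ b → x' i = x i := by
    intro i h1 h2; simp [hx', h1, h2]
  refine ⟨x', ?_, ?_, ?_, ?_⟩
  · intro i
    by_cases h1 : i = a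
    · subst h1; rw [hx'a]; have := hx0 b; have := hx0 i; rw [hc]; linarith
    · by_cases h2 : i = b
      · subst h2; rw [hx'b]
      · rw [hx'other i h1 h2]; exact hx0 i
  · have : ∑ i, x' i = (∑ i, x i)
        + c * ((∑ i, if i = a then (1:ℝ) else 0) - (∑ i, if i = b then (1:ℝ) else 0)) := by
      rw [hx']
      rw [Finset.sum_add_distrib, ← Finset.mul_sum, Finset.sum_sub_distrib]
    rw [this, hx1]
    simp
  · intro i hi
    simp only [mem_filter, mem_univ, true_and] at hi
    rw [Finset.mem_erase]
    by_cases h2 : i = b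
    · exact absurd (h2 ▸ hx'b) hi
    · refine ⟨h2, ?_⟩
      simp only [mem_filter, mem_univ, true_and]
      by_cases h1 : i = a
      · subst h1; exact ha
      · rw [← hx'other i h1 h2]; exact hi
  · rw [hx', MS_shift_eq G x c a b hne hnadj]
    nlinarith [mul_nonneg (hx0 b) (sub_nonneg.mpr hN)]

lemma MSQf_le (m : ℕ) (x : Fin n → ℝ) (hx0 : ∀ i, 0 ≤ x i) (hx1 : ∑ i, x i = 1)
    (hcard : ((univ : Finset (Fin n)).filter (fun i => x i ≠ 0)).card ≤ m) :
    MSQf G x ≤ 1 - 1 / (G.cliqueNum : ℝ) := by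
  classical
  induction m generalizing x with
  | zero =>
    exfalso
    have hall : ∀ i, x i = 0 := by
      intro i
      by_contra h
      have : i ∈ (univ : Finset (Fin n)).filter (fun i => x i ≠ 0) := by simp [h]
      rw [Finset.card_eq_zero.mp (Nat.le_zero.mp hcard)] at this
      exact absurd this (Finset.notMem_empty i)
    rw [Finset.sum_congr rfl (fun i _ => hall i)] at hx1
    simp at hx1
  | succ m ih =>
    by_cases hcl : G.IsClique
        (((univ : Finset (Fin n)).filter (fun i => x i ≠ 0) : Finset (Fin n)) : Set (Fin n))
    · exact MSQf_le_of_clique G x hx0 hx1 hcl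
    · rw [SimpleGraph.isClique_iff] at hcl
      rw [Set.Pairwise] at hcl
      push_neg at hcl
      obtain ⟨a, hat, b, hbt, hab, hnadj⟩ := hcl
      simp only [Finset.coe_filter, Set.mem_setOf_eq, mem_univ, true_and] at hat hbt
      have key : ∀ u v : Fin n, u ≠ v → ¬ G.Adj u v → x u ≠ 0 → x v ≠ 0 →
          MSNf G x v ≤ MSNf G x u → MSQf G x ≤ 1 - 1 / (G.cliqueNum : ℝ) := by
        intro u v huv hnadj' hu hv hN
        obtain ⟨x', h0', h1', hsub, hle⟩ := MS_step G x hx0 hx1 u v huv hnadj' hu hN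
        refine le_trans hle (ih x' h0' h1' (Nat.lt_succ_iff.mp ?_))
        have hvmem : v ∈ (univ : Finset (Fin n)).filter (fun i => x i ≠ 0) := by simp [hv]
        calc ((univ : Finset (Fin n)).filter (fun i => x' i ≠ 0)).card
            ≤ (((univ : Finset (Fin n)).filter (fun i => x i ≠ 0)).erase v).card :=
              Finset.card_le_card hsub
          _ < ((univ : Finset (Fin n)).filter (fun i => x i ≠ 0)).card :=
              Finset.card_erase_lt_of_mem hvmem
          _ ≤ m + 1 := hcard
      rcases le_total (MSNf G x b) (MSNf G x a) with h | h
      · exact key a b hab hnadj hat hbt h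
      · exact key b a hab.symm (fun h' => hnadj h'.symm) hbt hat h
      
end MotzkinStraus

/-- Motzkin–Straus: for a simple graph `G` on `n ≥ 1` vertices with
clique number `ω(G)`, the maximum of `2 ∑_{{i,j} ∈ E} x_i x_j` over the standard
simplex equals `1 − 1/ω(G)` (and is attained). -/
theorem stmt_4 (n : ℕ) (hn : 1 ≤ n) (G : SimpleGraph (Fin n)) [DecidableRel G.Adj] :
    IsGreatest
      {y : ℝ | ∃ x : Fin n → ℝ, (∀ i, 0 ≤ x i) ∧ (∑ i, x i) = 1 ∧
        y = 2 * ∑ e ∈ G.edgeFinset,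
          Sym2.lift ⟨fun i j => x i * x j, fun i j => mul_comm _ _⟩ e}
      (1 - 1 / (G.cliqueNum : ℝ)) := by
  classical
  have hk1 : 1 ≤ G.cliqueNum := by
    have v : Fin n := ⟨0, hn⟩
    have hclq : G.IsClique (({v} : Finset (Fin n)) : Set (Fin n)) := by
      simp [SimpleGraph.isClique_iff]
    have := hclq.card_le_cliqueNum
    simpa using this
  have hkR : (0:ℝ) < (G.cliqueNum : ℝ) := by exact_mod_cast hk1
  have hkne : (G.cliqueNum : ℝ) ≠ 0 := ne_of_gt hkR
  constructor
  · -- attained at the uniform measure on a maximum clique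
    obtain ⟨s, hs⟩ := G.exists_isNClique_cliqueNum
    have hscard : s.card = G.cliqueNum := hs.card_eq
    have hscard1 : 1 ≤ s.card := hscard ▸ hk1
    set x : Fin n → ℝ := fun i => if i ∈ s then ((G.cliqueNum : ℝ))⁻¹ else 0 with hx
    refine ⟨x, ?_, ?_, ?_⟩
    · intro i
      rw [hx]
      dsimp only
      split
      · positivity
      · exact le_rfl
    · rw [hx]
      rw [Finset.sum_ite_mem, Finset.univ_inter, Finset.sum_const, nsmul_eq_mul, hscard]
      field_simp
    · rw [MS_two_mul_edge_sum]
      have hinner : ∀ i : Fin n, (∑ j, if G.Adj i j then x i * x j else 0)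
          = if i ∈ s then ((s.card : ℝ) - 1) * ((G.cliqueNum : ℝ)⁻¹ * (G.cliqueNum : ℝ)⁻¹)
            else 0 := by
        intro i
        by_cases hi : i ∈ s
        · rw [if_pos hi]
          have hterm : ∀ j : Fin n, (if G.Adj i j then x i * x j else 0)
              = if j ∈ s.erase i then ((G.cliqueNum : ℝ)⁻¹ * (G.cliqueNum : ℝ)⁻¹) else 0 := by
            intro j
            by_cases hj : j ∈ s
            · by_cases hij : i = j
              · subst hij
                rw [if_neg (G.loopless.irrefl i), if_neg (by simp)]
              · have hadj : G.Adj i j := hs.isClique hi hj hij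
                rw [if_pos hadj, if_pos (Finset.mem_erase.mpr ⟨Ne.symm hij, hj⟩)]
                rw [hx]
                simp [hi, hj]
            · have hja : j ∉ s.erase i := fun h => hj (Finset.mem_of_mem_erase h)
              rw [if_neg hja]
              by_cases hadj : G.Adj i j
              · rw [if_pos hadj, hx]
                simp [hj]
              · rw [if_neg hadj]
          rw [Finset.sum_congr rfl (fun j _ => hterm j), Finset.sum_ite_mem,
            Finset.univ_inter, Finset.sum_const, nsmul_eq_mul,
            Finset.card_erase_of_mem hi]
          rw [Nat.cast_sub hscard1, Nat.cast_one]
        · rw [if_neg hi]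
          refine Finset.sum_eq_zero fun j _ => ?_
          have : x i = 0 := by rw [hx]; simp [hi]
          rw [this]
          simp
      rw [MSQf, Finset.sum_congr rfl (fun i _ => hinner i), Finset.sum_ite_mem,
        Finset.univ_inter, Finset.sum_const, nsmul_eq_mul, hscard]
      field_simp
  · rintro y ⟨x, hx0, hx1, rfl⟩
    rw [MS_two_mul_edge_sum]
    exact MSQf_le G _ x hx0 hx1 le_rfl
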